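/- For the Pólya urn with b_1 = 1, b_2 = δ − 1, ε = δ − 2, n − 1 draws, and X_1 the number of draws of the first color, define P_{e1}(n) = (1/2)P(X_1 = n/2) + P(X_1 > n/2). Then P_{e1}(2i+1) = P_{e1}(2i) for all positive integers i; in particular P_{e1}(n) is non-decreasing in n. -/

import Mathlib

open Finset

/-- Marginal distribution of `X₁` in the Pólya urn with `b₁ = 1`, `b₂ = δ − 1`,
`ε = δ − 2` after `n − 1` draws:
`P(X₁ = x) = C(n−1, x) · ∏_{l<x}(1+lε) · ∏_{l<n−1−x}(δ−1+lε) / ∏_{i<n−1}(δ+iε)`. -/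
noncomputable def urnMarginal (δ n x : ℕ) : ℚ :=
  ((n - 1).choose x : ℚ) *
      ((∏ l ∈ Finset.range x, ((1 : ℚ) + (l : ℚ) * ((δ : ℚ) - 2))) *
        (∏ l ∈ Finset.range (n - 1 - x), (((δ : ℚ) - 1) + (l : ℚ) * ((δ : ℚ) - 2)))) /
    (∏ i ∈ Finset.range (n - 1), ((δ : ℚ) + (i : ℚ) * ((δ : ℚ) - 2)))

/-- `P_{e1}(n) = (1/2)P(X₁ = n/2) + P(X₁ > n/2)` (the term `P(X₁ = n/2)` is zero when `n`
is odd). -/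
noncomputable def Pe1 (δ n : ℕ) : ℚ :=
  (1 / 2) * (∑ x ∈ (Finset.range n).filter (fun x => 2 * x = n), urnMarginal δ n x)
    + ∑ x ∈ (Finset.range n).filter (fun x => 2 * x > n), urnMarginal δ n x

section Aux
variable (δ : ℕ)

lemma den_factor_pos (hδ : 2 ≤ δ) (i : ℕ) : (0:ℚ) < (δ:ℚ) + (i:ℚ)*((δ:ℚ)-2) := by
  have h2 : (2:ℚ) ≤ (δ:ℚ) := by exact_mod_cast hδ
  have hi : (0:ℚ) ≤ (i:ℚ) := Nat.cast_nonneg i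
  nlinarith

lemma dP_pos (hδ : 2 ≤ δ) (m : ℕ) :
    (0:ℚ) < ∏ i ∈ Finset.range m, ((δ:ℚ) + (i:ℚ)*((δ:ℚ)-2)) :=
  Finset.prod_pos (fun i _ => den_factor_pos δ hδ i)

lemma aP_pos (hδ : 2 ≤ δ) (x : ℕ) :
    (0:ℚ) < ∏ l ∈ Finset.range x, ((1:ℚ) + (l:ℚ)*((δ:ℚ)-2)) := by
  apply Finset.prod_pos
  intro l _
  have h2 : (2:ℚ) ≤ (δ:ℚ) := by exact_mod_cast hδ
  have hl : (0:ℚ) ≤ (l:ℚ) := Nat.cast_nonneg l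
  nlinarith

lemma bP_pos (hδ : 2 ≤ δ) (x : ℕ) :
    (0:ℚ) < ∏ l ∈ Finset.range x, (((δ:ℚ)-1) + (l:ℚ)*((δ:ℚ)-2)) := by
  apply Finset.prod_pos
  intro l _
  have h2 : (2:ℚ) ≤ (δ:ℚ) := by exact_mod_cast hδ
  have hl : (0:ℚ) ≤ (l:ℚ) := Nat.cast_nonneg l
  nlinarith

lemma urnMarginal_zero (n x : ℕ) (h : n - 1 < x) : urnMarginal δ n x = 0 := by
  simp [urnMarginal, Nat.choose_eq_zero_of_lt h]

lemma urn_rec (hδ : 2 ≤ δ) (m y : ℕ) (hy : y ≤ m) :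
    urnMarginal δ (m+2) (y+1) =
      urnMarginal δ (m+1) y * ((1 + (y:ℚ)*((δ:ℚ)-2)) / ((δ:ℚ) + (m:ℚ)*((δ:ℚ)-2)))
      + urnMarginal δ (m+1) (y+1) *
        ((((δ:ℚ)-1) + ((m - (y+1) : ℕ):ℚ)*((δ:ℚ)-2)) / ((δ:ℚ) + (m:ℚ)*((δ:ℚ)-2))) := by
  have hD := den_factor_pos δ hδ m
  have hP := dP_pos δ hδ m
  rcases eq_or_lt_of_le hy with rfl | hlt
  · have hz : urnMarginal δ (y+1) (y+1) = 0 := urnMarginal_zero δ (y+1) (y+1) (by omega)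
    rw [hz]
    simp only [urnMarginal]
    have e1 : y + 2 - 1 = y + 1 := by omega
    have e2 : y + 1 - 1 = y := by omega
    rw [e1, e2]
    simp only [Nat.sub_self]
    rw [Finset.prod_range_succ (fun l => (1:ℚ) + (l:ℚ)*((δ:ℚ)-2)) y,
        Finset.prod_range_succ (fun i => (δ:ℚ) + (i:ℚ)*((δ:ℚ)-2)) y]
    simp only [Nat.choose_self, Finset.range_zero, Finset.prod_empty, Nat.cast_one]
    have hPy := dP_pos δ hδ y
    have hDy := den_factor_pos δ hδ y
    simp only [div_eq_mul_inv, mul_inv]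
    ring
  · obtain ⟨s, rfl⟩ : ∃ s, m = y + 1 + s := ⟨m - (y+1), by omega⟩
    simp only [urnMarginal]
    have e1 : y + 1 + s + 2 - 1 = y + 1 + s + 1 := by omega
    have e2 : y + 1 + s + 1 - 1 = y + 1 + s := by omega
    have e3 : y + 1 + s - (y + 1) = s := by omega
    have e4 : y + 1 + s - y = s + 1 := by omega
    have e6 : y + 1 + s + 1 - (y+1) = s + 1 := by omega
    rw [e1, e2, e3, e4, e6]
    rw [Finset.prod_range_succ (fun l => (1:ℚ) + (l:ℚ)*((δ:ℚ)-2)) y,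
        Finset.prod_range_succ (fun l => ((δ:ℚ)-1) + (l:ℚ)*((δ:ℚ)-2)) s,
        Finset.prod_range_succ (fun i => (δ:ℚ) + (i:ℚ)*((δ:ℚ)-2)) (y+1+s),
        Nat.choose_succ_succ (y+1+s) y]
    have hPm := dP_pos δ hδ (y+1+s)
    have hDm := den_factor_pos δ hδ (y+1+s)
    push_cast
    simp only [div_eq_mul_inv, mul_inv]
    ring
end Aux


lemma part1 (δ : ℕ) (hδ : 2 ≤ δ) (j : ℕ) :
    Pe1 δ (2*(j+1)+1) = Pe1 δ (2*(j+1)) := by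
  have hD := den_factor_pos δ hδ (2*j+1)
  have hf1 : (Finset.range (2*(j+1)+1)).filter (fun x => 2 * x = 2*(j+1)+1) = ∅ := by
    ext x; simp only [Finset.mem_filter, Finset.mem_range, Finset.notMem_empty, iff_false,
      not_and]; omega
  have hf2 : (Finset.range (2*(j+1)+1)).filter (fun x => 2 * x > 2*(j+1)+1)
      = (Finset.range (j+1)).map ⟨fun k => j+2+k, add_right_injective (j+2)⟩ := by
    ext x
    simp only [Finset.mem_filter, Finset.mem_range, Finset.mem_map,
      Function.Embedding.coeFn_mk, gt_iff_lt]
    constructor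
    · rintro ⟨h1, h2⟩; exact ⟨x - (j+2), by omega, by omega⟩
    · rintro ⟨k, hk, rfl⟩; omega
  have hf3 : (Finset.range (2*(j+1))).filter (fun x => 2 * x = 2*(j+1)) = {j+1} := by
    ext x
    simp only [Finset.mem_filter, Finset.mem_range, Finset.mem_singleton]
    omega
  have hf4 : (Finset.range (2*(j+1))).filter (fun x => 2 * x > 2*(j+1))
      = (Finset.range j).map ⟨fun k => j+2+k, add_right_injective (j+2)⟩ := by
    ext x
    simp only [Finset.mem_filter, Finset.mem_range, Finset.mem_map,
      Function.Embedding.coeFn_mk, gt_iff_lt]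
    constructor
    · rintro ⟨h1, h2⟩; exact ⟨x - (j+2), by omega, by omega⟩
    · rintro ⟨k, hk, rfl⟩; omega
  rw [Pe1, Pe1, hf1, hf2, hf3, hf4, Finset.sum_empty, Finset.sum_singleton,
    Finset.sum_map, Finset.sum_map]
  simp only [Function.Embedding.coeFn_mk, mul_zero, zero_add]
  have key : ∀ k ∈ Finset.range (j+1), urnMarginal δ (2*(j+1)+1) (j+2+k) =
      urnMarginal δ (2*(j+1)) (j+1+k) *
        ((1 + ((j+1+k : ℕ):ℚ)*((δ:ℚ)-2)) / ((δ:ℚ) + ((2*j+1 : ℕ):ℚ)*((δ:ℚ)-2)))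
      + urnMarginal δ (2*(j+1)) (j+2+k) *
        ((((δ:ℚ)-1) + ((2*j+1 - (j+2+k) : ℕ):ℚ)*((δ:ℚ)-2)) /
          ((δ:ℚ) + ((2*j+1 : ℕ):ℚ)*((δ:ℚ)-2))) := by
    intro k hk
    rw [Finset.mem_range] at hk
    have h := urn_rec δ hδ (2*j+1) (j+1+k) (by omega)
    rw [show 2*j+1+2 = 2*(j+1)+1 from by ring, show j+1+k+1 = j+2+k from by ring,
      show 2*j+1+1 = 2*(j+1) from by ring] at h
    push_cast at h ⊢
    convert h using 4
  rw [Finset.sum_congr rfl key, Finset.sum_add_distrib,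
    Finset.sum_range_succ' (fun k => urnMarginal δ (2*(j+1)) (j+1+k) *
      ((1 + ((j+1+k : ℕ):ℚ)*((δ:ℚ)-2)) / ((δ:ℚ) + ((2*j+1 : ℕ):ℚ)*((δ:ℚ)-2)))) j,
    Finset.sum_range_succ (fun k => urnMarginal δ (2*(j+1)) (j+2+k) *
      ((((δ:ℚ)-1) + ((2*j+1 - (j+2+k) : ℕ):ℚ)*((δ:ℚ)-2)) /
        ((δ:ℚ) + ((2*j+1 : ℕ):ℚ)*((δ:ℚ)-2)))) j]
  have hzero : urnMarginal δ (2*(j+1)) (j+2+j) = 0 :=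
    urnMarginal_zero δ _ _ (by omega)
  rw [hzero, zero_mul, add_zero]
  have hhalf : urnMarginal δ (2*(j+1)) (j+1+0) *
      ((1 + ((j+1+0 : ℕ):ℚ)*((δ:ℚ)-2)) / ((δ:ℚ) + ((2*j+1 : ℕ):ℚ)*((δ:ℚ)-2)))
      = 1/2 * urnMarginal δ (2*(j+1)) (j+1) := by
    rw [show j+1+0 = j+1 from rfl]
    rw [show (1 + ((j+1 : ℕ):ℚ)*((δ:ℚ)-2)) / ((δ:ℚ) + ((2*j+1 : ℕ):ℚ)*((δ:ℚ)-2)) = 1/2 from by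
      rw [div_eq_div_iff hD.ne' two_ne_zero]; push_cast; ring]
    ring
  rw [hhalf]
  have hcomb : ∀ k ∈ Finset.range j,
      urnMarginal δ (2*(j+1)) (j+1+(k+1)) *
        ((1 + ((j+1+(k+1) : ℕ):ℚ)*((δ:ℚ)-2)) / ((δ:ℚ) + ((2*j+1 : ℕ):ℚ)*((δ:ℚ)-2)))
      + urnMarginal δ (2*(j+1)) (j+2+k) *
        ((((δ:ℚ)-1) + ((2*j+1 - (j+2+k) : ℕ):ℚ)*((δ:ℚ)-2)) /
          ((δ:ℚ) + ((2*j+1 : ℕ):ℚ)*((δ:ℚ)-2)))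
      = urnMarginal δ (2*(j+1)) (j+2+k) := by
    intro k hk
    rw [Finset.mem_range] at hk
    rw [show j+1+(k+1) = j+2+k from by ring, ← mul_add, ← add_div]
    rw [show 2*j+1 - (j+2+k) = j - (1+k) from by omega, Nat.cast_sub (by omega : 1+k ≤ j)]
    rw [show (1 + ((j+2+k : ℕ):ℚ)*((δ:ℚ)-2) + (((δ:ℚ)-1) + (((j:ℕ):ℚ) - ((1+k : ℕ):ℚ))*((δ:ℚ)-2)))
        = (δ:ℚ) + ((2*j+1 : ℕ):ℚ)*((δ:ℚ)-2) from by push_cast; ring]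
    rw [div_self hD.ne', mul_one]
  have hAB : (∑ k ∈ Finset.range j, urnMarginal δ (2*(j+1)) (j+1+(k+1)) *
        ((1 + ((j+1+(k+1) : ℕ):ℚ)*((δ:ℚ)-2)) / ((δ:ℚ) + ((2*j+1 : ℕ):ℚ)*((δ:ℚ)-2))))
      + (∑ k ∈ Finset.range j, urnMarginal δ (2*(j+1)) (j+2+k) *
        ((((δ:ℚ)-1) + ((2*j+1 - (j+2+k) : ℕ):ℚ)*((δ:ℚ)-2)) /
          ((δ:ℚ) + ((2*j+1 : ℕ):ℚ)*((δ:ℚ)-2))))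
      = ∑ k ∈ Finset.range j, urnMarginal δ (2*(j+1)) (j+2+k) := by
    rw [← Finset.sum_add_distrib]
    exact Finset.sum_congr rfl hcomb
  linarith [hAB]


lemma part2 (δ : ℕ) (hδ : 2 ≤ δ) (j : ℕ) :
    Pe1 δ (2*(j+1)+1) ≤ Pe1 δ (2*(j+1)+2) := by
  have hD := den_factor_pos δ hδ (2*j+2)
  -- filters
  have hf2 : (Finset.range (2*(j+1)+1)).filter (fun x => 2 * x > 2*(j+1)+1)
      = (Finset.range (j+1)).map ⟨fun k => j+2+k, add_right_injective (j+2)⟩ := by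
    ext x
    simp only [Finset.mem_filter, Finset.mem_range, Finset.mem_map,
      Function.Embedding.coeFn_mk, gt_iff_lt]
    constructor
    · rintro ⟨h1, h2⟩; exact ⟨x - (j+2), by omega, by omega⟩
    · rintro ⟨k, hk, rfl⟩; omega
  have hf1 : (Finset.range (2*(j+1)+1)).filter (fun x => 2 * x = 2*(j+1)+1) = ∅ := by
    ext x; simp only [Finset.mem_filter, Finset.mem_range, Finset.notMem_empty, iff_false,
      not_and]; omega
  have hf3 : (Finset.range (2*(j+1)+2)).filter (fun x => 2 * x = 2*(j+1)+2) = {j+2} := by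
    ext x
    simp only [Finset.mem_filter, Finset.mem_range, Finset.mem_singleton]
    omega
  have hf4 : (Finset.range (2*(j+1)+2)).filter (fun x => 2 * x > 2*(j+1)+2)
      = (Finset.range (j+1)).map ⟨fun k => j+3+k, add_right_injective (j+3)⟩ := by
    ext x
    simp only [Finset.mem_filter, Finset.mem_range, Finset.mem_map,
      Function.Embedding.coeFn_mk, gt_iff_lt]
    constructor
    · rintro ⟨h1, h2⟩; exact ⟨x - (j+3), by omega, by omega⟩
    · rintro ⟨k, hk, rfl⟩; omega
  rw [Pe1, Pe1, hf1, hf2, hf3, hf4, Finset.sum_empty, Finset.sum_singleton,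
    Finset.sum_map, Finset.sum_map]
  simp only [Function.Embedding.coeFn_mk, mul_zero, zero_add]
  -- recurrence rewriting on the larger side
  have key : ∀ k ∈ Finset.range (j+1), urnMarginal δ (2*(j+1)+2) (j+3+k) =
      urnMarginal δ (2*(j+1)+1) (j+2+k) *
        ((1 + ((j+2+k : ℕ):ℚ)*((δ:ℚ)-2)) / ((δ:ℚ) + ((2*j+2 : ℕ):ℚ)*((δ:ℚ)-2)))
      + urnMarginal δ (2*(j+1)+1) (j+3+k) *
        ((((δ:ℚ)-1) + ((2*j+2 - (j+3+k) : ℕ):ℚ)*((δ:ℚ)-2)) /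
          ((δ:ℚ) + ((2*j+2 : ℕ):ℚ)*((δ:ℚ)-2))) := by
    intro k hk
    rw [Finset.mem_range] at hk
    have h := urn_rec δ hδ (2*j+2) (j+2+k) (by omega)
    rw [show 2*j+2+2 = 2*(j+1)+2 from by ring, show j+2+k+1 = j+3+k from by ring,
      show 2*j+2+1 = 2*(j+1)+1 from by ring] at h
    push_cast at h ⊢
    convert h using 4
  have keymid : urnMarginal δ (2*(j+1)+2) (j+2) =
      urnMarginal δ (2*(j+1)+1) (j+1) *
        ((1 + ((j+1 : ℕ):ℚ)*((δ:ℚ)-2)) / ((δ:ℚ) + ((2*j+2 : ℕ):ℚ)*((δ:ℚ)-2)))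
      + urnMarginal δ (2*(j+1)+1) (j+2) *
        ((((δ:ℚ)-1) + ((j : ℕ):ℚ)*((δ:ℚ)-2)) / ((δ:ℚ) + ((2*j+2 : ℕ):ℚ)*((δ:ℚ)-2))) := by
    have h := urn_rec δ hδ (2*j+2) (j+1) (by omega)
    rw [show 2*j+2+2 = 2*(j+1)+2 from by ring, show j+1+1 = j+2 from by ring,
      show 2*j+2+1 = 2*(j+1)+1 from by ring, show 2*j+2 - (j+2) = j from by omega] at h
    push_cast at h ⊢
    convert h using 4
  rw [Finset.sum_congr rfl key, Finset.sum_add_distrib, keymid,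
    Finset.sum_range_succ' (fun k => urnMarginal δ (2*(j+1)+1) (j+2+k) *
      ((1 + ((j+2+k : ℕ):ℚ)*((δ:ℚ)-2)) / ((δ:ℚ) + ((2*j+2 : ℕ):ℚ)*((δ:ℚ)-2)))) j,
    Finset.sum_range_succ (fun k => urnMarginal δ (2*(j+1)+1) (j+3+k) *
      ((((δ:ℚ)-1) + ((2*j+2 - (j+3+k) : ℕ):ℚ)*((δ:ℚ)-2)) /
        ((δ:ℚ) + ((2*j+2 : ℕ):ℚ)*((δ:ℚ)-2)))) j,
    Finset.sum_range_succ' (fun k => urnMarginal δ (2*(j+1)+1) (j+2+k)) j]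
  have hzero : urnMarginal δ (2*(j+1)+1) (j+3+j) = 0 :=
    urnMarginal_zero δ _ _ (by omega)
  rw [hzero, zero_mul, add_zero]
  -- combine the shifted sums pointwise
  have hcomb : ∀ k ∈ Finset.range j,
      urnMarginal δ (2*(j+1)+1) (j+2+(k+1)) *
        ((1 + ((j+2+(k+1) : ℕ):ℚ)*((δ:ℚ)-2)) / ((δ:ℚ) + ((2*j+2 : ℕ):ℚ)*((δ:ℚ)-2)))
      + urnMarginal δ (2*(j+1)+1) (j+3+k) *
        ((((δ:ℚ)-1) + ((2*j+2 - (j+3+k) : ℕ):ℚ)*((δ:ℚ)-2)) /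
          ((δ:ℚ) + ((2*j+2 : ℕ):ℚ)*((δ:ℚ)-2)))
      = urnMarginal δ (2*(j+1)+1) (j+2+(k+1)) := by
    intro k hk
    rw [Finset.mem_range] at hk
    rw [show j+3+k = j+2+(k+1) from by ring, ← mul_add, ← add_div]
    rw [show 2*j+2 - (j+2+(k+1)) = j - (1+k) from by omega,
      Nat.cast_sub (by omega : 1+k ≤ j)]
    rw [show (1 + ((j+2+(k+1) : ℕ):ℚ)*((δ:ℚ)-2)
          + (((δ:ℚ)-1) + (((j:ℕ):ℚ) - ((1+k : ℕ):ℚ))*((δ:ℚ)-2)))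
        = (δ:ℚ) + ((2*j+2 : ℕ):ℚ)*((δ:ℚ)-2) from by push_cast; ring]
    rw [div_self hD.ne', mul_one]
  have hAB : (∑ k ∈ Finset.range j, urnMarginal δ (2*(j+1)+1) (j+2+(k+1)) *
        ((1 + ((j+2+(k+1) : ℕ):ℚ)*((δ:ℚ)-2)) / ((δ:ℚ) + ((2*j+2 : ℕ):ℚ)*((δ:ℚ)-2))))
      + (∑ k ∈ Finset.range j, urnMarginal δ (2*(j+1)+1) (j+3+k) *
        ((((δ:ℚ)-1) + ((2*j+2 - (j+3+k) : ℕ):ℚ)*((δ:ℚ)-2)) /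
          ((δ:ℚ) + ((2*j+2 : ℕ):ℚ)*((δ:ℚ)-2))))
      = ∑ k ∈ Finset.range j, urnMarginal δ (2*(j+1)+1) (j+2+(k+1)) := by
    rw [← Finset.sum_add_distrib]
    exact Finset.sum_congr rfl hcomb
  -- the key inequality: P(j+2)*d2 ≤ P(j+1)*d1
  have hPi := dP_pos δ hδ (2*(j+1))
  have hA := aP_pos δ hδ (j+2)
  have hB := bP_pos δ hδ (j+1)
  set R : ℚ := (∏ l ∈ Finset.range (j+2), ((1:ℚ) + (l:ℚ)*((δ:ℚ)-2))) *
      (∏ l ∈ Finset.range (j+1), (((δ:ℚ)-1) + (l:ℚ)*((δ:ℚ)-2))) /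
      ((∏ i ∈ Finset.range (2*(j+1)), ((δ:ℚ) + (i:ℚ)*((δ:ℚ)-2))) *
        ((δ:ℚ) + ((2*j+2 : ℕ):ℚ)*((δ:ℚ)-2))) with hRdef
  have hR : 0 ≤ R := by
    apply div_nonneg (le_of_lt (mul_pos hA hB))
    have := den_factor_pos δ hδ (2*j+2)
    positivity
  have e1 : urnMarginal δ (2*(j+1)+1) (j+1) *
      ((1 + ((j+1 : ℕ):ℚ)*((δ:ℚ)-2)) / ((δ:ℚ) + ((2*j+2 : ℕ):ℚ)*((δ:ℚ)-2)))
      = ((2*(j+1)).choose (j+1) : ℚ) * R := by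
    rw [hRdef, Finset.prod_range_succ (fun l => (1:ℚ) + (l:ℚ)*((δ:ℚ)-2)) (j+1)]
    simp only [urnMarginal]
    rw [show 2*(j+1)+1-1 = 2*(j+1) from by omega, show 2*(j+1) - (j+1) = j+1 from by omega]
    rw [div_mul_div_comm, ← mul_div_assoc]
    congr 1
    ring
  have e2 : urnMarginal δ (2*(j+1)+1) (j+2) *
      ((((δ:ℚ)-1) + ((j : ℕ):ℚ)*((δ:ℚ)-2)) / ((δ:ℚ) + ((2*j+2 : ℕ):ℚ)*((δ:ℚ)-2)))
      = ((2*(j+1)).choose (j+2) : ℚ) * R := by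
    rw [hRdef, Finset.prod_range_succ (fun l => ((δ:ℚ)-1) + (l:ℚ)*((δ:ℚ)-2)) j]
    simp only [urnMarginal]
    rw [show 2*(j+1)+1-1 = 2*(j+1) from by omega, show 2*(j+1) - (j+2) = j from by omega]
    rw [div_mul_div_comm, ← mul_div_assoc]
    congr 1
    ring
  have hchoose : (((2*(j+1)).choose (j+2) : ℕ) : ℚ) ≤ (((2*(j+1)).choose (j+1) : ℕ) : ℚ) := by
    have h := Nat.choose_le_middle (j+2) (2*(j+1))
    rw [show (2*(j+1))/2 = j+1 from by omega] at h
    exact_mod_cast h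
  have hle : urnMarginal δ (2*(j+1)+1) (j+2) *
      ((((δ:ℚ)-1) + ((j : ℕ):ℚ)*((δ:ℚ)-2)) / ((δ:ℚ) + ((2*j+2 : ℕ):ℚ)*((δ:ℚ)-2)))
      ≤ urnMarginal δ (2*(j+1)+1) (j+1) *
      ((1 + ((j+1 : ℕ):ℚ)*((δ:ℚ)-2)) / ((δ:ℚ) + ((2*j+2 : ℕ):ℚ)*((δ:ℚ)-2))) := by
    rw [e1, e2]
    exact mul_le_mul_of_nonneg_right hchoose hR
  -- coefficient identity : c1 0 + d2 = 1, multiplied by P(j+2)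
  have hmul : urnMarginal δ (2*(j+1)+1) (j+2+0) *
        ((1 + ((j+2+0 : ℕ):ℚ)*((δ:ℚ)-2)) / ((δ:ℚ) + ((2*j+2 : ℕ):ℚ)*((δ:ℚ)-2)))
      + urnMarginal δ (2*(j+1)+1) (j+2) *
        ((((δ:ℚ)-1) + ((j : ℕ):ℚ)*((δ:ℚ)-2)) / ((δ:ℚ) + ((2*j+2 : ℕ):ℚ)*((δ:ℚ)-2)))
      = urnMarginal δ (2*(j+1)+1) (j+2) := by
    rw [show j+2+0 = j+2 from rfl, ← mul_add, ← add_div]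
    rw [show (1 + ((j+2 : ℕ):ℚ)*((δ:ℚ)-2) + (((δ:ℚ)-1) + ((j : ℕ):ℚ)*((δ:ℚ)-2)))
        = (δ:ℚ) + ((2*j+2 : ℕ):ℚ)*((δ:ℚ)-2) from by push_cast; ring]
    rw [div_self hD.ne', mul_one]
  linarith [hAB, hle, hmul]


lemma step_mono (δ : ℕ) (hδ : 2 ≤ δ) (n : ℕ) (hn : 2 ≤ n) : Pe1 δ n ≤ Pe1 δ (n+1) := by
  rcases Nat.even_or_odd n with ⟨i, rfl⟩ | ⟨i, rfl⟩
  · obtain ⟨j, rfl⟩ : ∃ j, i = j + 1 := ⟨i - 1, by omega⟩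
    rw [show j+1+(j+1) = 2*(j+1) from by ring]
    exact le_of_eq (part1 δ hδ j).symm
  · obtain ⟨j, rfl⟩ : ∃ j, i = j + 1 := ⟨i - 1, by omega⟩
    exact part2 δ hδ j

theorem Pe1_odd_eq_even_and_monotone (δ : ℕ) (hδ : 2 ≤ δ) :
    (∀ i : ℕ, 0 < i → Pe1 δ (2 * i + 1) = Pe1 δ (2 * i)) ∧
    (∀ n m : ℕ, 2 ≤ n → n ≤ m → Pe1 δ n ≤ Pe1 δ m) := by
  constructor
  · intro i hi
    obtain ⟨j, rfl⟩ : ∃ j, i = j + 1 := ⟨i - 1, by omega⟩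
    exact part1 δ hδ j
  · intro n m hn hnm
    induction m, hnm using Nat.le_induction with
    | base => exact le_refl _
    | succ m hm ih => exact le_trans ih (step_mono δ hδ m (le_trans hn hm))
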